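/- For every Schwartz function f : ℝ → ℂ, ∫_ℝ ∫_ℝ |f(x+α) + f(x−α) − 2 f(x)|² / α⁴ dx dα = (32π⁴/3) ∫_ℝ |ξ|³ · |𝓕f(ξ)|² dξ, where 𝓕f(ξ) = ∫_ℝ f(x) e^{-2πi x ξ} dx. -/

import Mathlib

section Aux
open MeasureTheory Real Complex FourierTransform
open scoped ComplexConjugate


lemma fourier_conj (u : ℝ → ℂ) (x : ℝ) :
    𝓕 (fun t => conj (u t)) x = conj (𝓕⁻ u x) := by
  rw [Real.fourier_eq', Real.fourierInv_eq', ← integral_conj]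
  congr 1
  ext t
  simp only [smul_eq_mul, map_mul, ← Complex.exp_conj]
  congr 2
  simp [Complex.ext_iff]

lemma flip_innerR : (innerₗ ℝ).flip = innerₗ ℝ := by
  ext x y
  simpa using mul_comm x y

lemma integrable_conj' {u : ℝ → ℂ} (h : MeasureTheory.Integrable u) :
    MeasureTheory.Integrable (fun x => conj (u x)) :=
  ⟨Complex.continuous_conj.comp_aestronglyMeasurable h.1,
   by simpa [MeasureTheory.HasFiniteIntegral] using h.2⟩

lemma parseval_complex {g : ℝ → ℂ} (hc : Continuous g) (hi : Integrable g)
    (hFi : Integrable (𝓕 g)) :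
    ∫ ξ, 𝓕 g ξ * conj (𝓕 g ξ) = ∫ x, g x * conj (g x) := by
  have key := VectorFourier.integral_bilin_fourierIntegral_eq_flip
    (ContinuousLinearMap.mul ℂ ℂ) (E := ℂ) (F := ℂ)
    (V := ℝ) (W := ℝ) (μ := volume) (ν := volume) (L := innerₗ ℝ)
    Real.continuous_fourierChar (by exact continuous_inner)
    hi (integrable_conj' hFi)
  rw [flip_innerR] at key
  have h2 : ∀ x : ℝ, VectorFourier.fourierIntegral 𝐞 volume (innerₗ ℝ) (fun ξ => conj (𝓕 g ξ)) x
      = conj (g x) := by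
    intro x
    have : VectorFourier.fourierIntegral 𝐞 volume (innerₗ ℝ) (fun ξ => conj (𝓕 g ξ)) x
        = 𝓕 (fun ξ => conj (𝓕 g ξ)) x := rfl
    rw [this, fourier_conj]
    rw [hi.fourierInv_fourier_eq hFi hc.continuousAt]
  simpa [h2, show ∀ ξ, VectorFourier.fourierIntegral 𝐞 volume (innerₗ ℝ) g ξ = 𝓕 g ξ from fun _ => rfl] using key

lemma parseval_norm {g : ℝ → ℂ} (hc : Continuous g) (hi : Integrable g)
    (hFi : Integrable (𝓕 g)) :
    ∫ ξ, ‖𝓕 g ξ‖ ^ 2 = ∫ x, ‖g x‖ ^ 2 := by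
  have := parseval_complex hc hi hFi
  simp_rw [Complex.mul_conj, Complex.normSq_eq_norm_sq] at this
  have cast : ∀ u : ℝ → ℝ, ∫ x : ℝ, ((u x : ℝ) : ℂ) = ((∫ x, u x : ℝ) : ℂ) :=
    fun u => integral_ofReal
  rw [cast, cast] at this
  exact_mod_cast this

lemma real_fourier_eq_fourier (f : ℝ → ℂ) :
    𝓕 f = Fourier.fourierIntegral (Real.fourierChar) MeasureTheory.volume f := by
  ext w; rw [Real.fourier_real_eq, Fourier.fourierIntegral_def]

lemma fourier_translate (u : ℝ → ℂ) (α ξ : ℝ) :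
    𝓕 (fun x => u (x + α)) ξ = Real.fourierChar (α * ξ) • 𝓕 u ξ := by
  have := Fourier.fourierIntegral_comp_add_right (Real.fourierChar) MeasureTheory.volume u α
  have h2 := congrFun this ξ
  rw [real_fourier_eq_fourier, real_fourier_eq_fourier]
  exact h2

open scoped FourierTransform in
lemma fourier_second_diff (f : SchwartzMap ℝ ℂ) (α ξ : ℝ) :
    𝓕 (fun x => f (x + α) + f (x - α) - 2 * f x) ξ
      = ((Real.fourierChar (α * ξ) : ℂ) + (Real.fourierChar (-α * ξ) : ℂ) - 2) * 𝓕 (⇑f) ξ := by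
  have hi : Integrable (⇑f) := f.integrable
  have hi₁ : Integrable (fun x => f (x + α)) := hi.comp_add_right α
  have hi₂ : Integrable (fun x => f (x - α)) := hi.comp_sub_right α
  have e₁ : Integrable (fun x : ℝ => Real.fourierChar (-(x * ξ)) • f (x + α)) :=
    by have := (Real.fourierIntegral_convergent_iff ξ).2 hi₁; simp_rw [mul_comm _ ξ]; exact this
  have e₂ : Integrable (fun x : ℝ => Real.fourierChar (-(x * ξ)) • f (x - α)) :=
    by have := (Real.fourierIntegral_convergent_iff ξ).2 hi₂; simp_rw [mul_comm _ ξ]; exact this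
  have e₃ : Integrable (fun x : ℝ => Real.fourierChar (-(x * ξ)) • (2 * f x)) :=
    by have := (Real.fourierIntegral_convergent_iff ξ).2 (hi.const_mul 2); simp_rw [mul_comm _ ξ]; exact this
  have expand : 𝓕 (fun x => f (x + α) + f (x - α) - 2 * f x) ξ
      = ∫ x : ℝ, (Real.fourierChar (-(x * ξ)) • f (x + α)
          + Real.fourierChar (-(x * ξ)) • f (x - α)
          - Real.fourierChar (-(x * ξ)) • (2 * f x)) := by
    rw [Real.fourier_real_eq]
    congr 1
    ext x
    simp [smul_add, smul_sub]
  have e₁₂ : Integrable (fun x : ℝ => Real.fourierChar (-(x * ξ)) • f (x + α)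
      + Real.fourierChar (-(x * ξ)) • f (x - α)) := e₁.add e₂
  rw [expand, integral_sub e₁₂ e₃, integral_add e₁ e₂]
  have t₁ : (∫ x : ℝ, Real.fourierChar (-(x * ξ)) • f (x + α))
      = Real.fourierChar (α * ξ) • 𝓕 (⇑f) ξ := by rw [← fourier_translate (⇑f) α ξ, Real.fourier_real_eq]
  have t₂ : (∫ x : ℝ, Real.fourierChar (-(x * ξ)) • f (x - α))
      = Real.fourierChar (-α * ξ) • 𝓕 (⇑f) ξ := by
    have := fourier_translate (⇑f) (-α) ξ
    simp only [← sub_eq_add_neg] at this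
    rw [← this]
    rw [Real.fourier_real_eq]
  have t₃ : (∫ x : ℝ, Real.fourierChar (-(x * ξ)) • (2 * f x)) = 2 * 𝓕 (⇑f) ξ := by
    simp_rw [show ∀ (c : Circle) (z : ℂ), c • (2 * z) = (2:ℂ) • (c • z) from fun c z => by
      simp only [Circle.smul_def, smul_eq_mul]; ring]
    rw [integral_smul]
    rw [smul_eq_mul]
    rw [Real.fourier_real_eq]
  rw [t₁, t₂, t₃, Circle.smul_def, Circle.smul_def]
  simp only [smul_eq_mul]
  ring

lemma char_sum_eq (θ : ℝ) :
    ((Real.fourierChar (θ) : ℂ) + (Real.fourierChar (-θ) : ℂ) - 2)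
      = ((2 * Real.cos (2 * π * θ) - 2 : ℝ) : ℂ) := by
  rw [Real.fourierChar_apply, Real.fourierChar_apply]
  rw [show ((2 * π * -θ : ℝ) : ℂ) = -((2 * π * θ : ℝ) : ℂ) by push_cast; ring]
  rw [show (-((2 * π * θ : ℝ) : ℂ)) * Complex.I = (-((2 * π * θ : ℝ) : ℂ)) * Complex.I from rfl]
  rw [show (-((2 * π * θ : ℝ) : ℂ)) = ((-(2 * π * θ) : ℝ) : ℂ) by push_cast; ring] at *
  rw [Complex.exp_mul_I, Complex.exp_mul_I, ← Complex.ofReal_cos, ← Complex.ofReal_cos,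
    ← Complex.ofReal_sin, ← Complex.ofReal_sin, Real.cos_neg, Real.sin_neg]
  push_cast
  ring

noncomputable def tent : ℝ → ℂ := fun x => ((max (1 - |x|) 0 : ℝ) : ℂ)

lemma tent_cont : Continuous tent := by
  unfold tent
  continuity

lemma tent_zero {x : ℝ} (hx : x ∉ Set.Icc (-1 : ℝ) 1) : tent x = 0 := by
  have : (1 : ℝ) ≤ |x| := by
    by_contra h
    push_neg at h
    exact hx ⟨by linarith [neg_abs_le x], by linarith [le_abs_self x]⟩
  simp [tent, max_eq_right, sub_nonpos.2 this]

lemma tent_hcs : HasCompactSupport tent := by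
  apply HasCompactSupport.intro (isCompact_Icc (a := (-1:ℝ)) (b := 1))
  exact fun x hx => tent_zero hx

lemma tent_integrable : Integrable tent := tent_cont.integrable_of_hasCompactSupport tent_hcs

-- Fourier transform of the tent at ξ ≠ 0
lemma fourier_tent {ξ : ℝ} (hξ : ξ ≠ 0) :
    𝓕 tent ξ = ((Real.sin (π * ξ) ^ 2 / (π * ξ) ^ 2 : ℝ) : ℂ) := by
  classical
  set c : ℂ := ((-2 * π * ξ : ℝ) : ℂ) * Complex.I with hc
  have hπ : (π : ℝ) ≠ 0 := Real.pi_ne_zero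
  have hcne : c ≠ 0 := mul_ne_zero
    (Complex.ofReal_ne_zero.mpr (mul_ne_zero (mul_ne_zero (by norm_num) hπ) hξ))
    Complex.I_ne_zero
  clear_value c
  -- as an integral over [-1,1]
  have step1 : 𝓕 tent ξ = ∫ x in Set.Icc (-1:ℝ) 1, Real.fourierChar (-(x * ξ)) • tent x := by
    rw [Real.fourier_real_eq]
    exact (setIntegral_eq_integral_of_forall_compl_eq_zero
      (fun x hx => by rw [tent_zero hx, smul_zero])).symm
  have cont : Continuous fun x : ℝ => Real.fourierChar (-(x * ξ)) • tent x :=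
    (Real.continuous_fourierChar.comp ((continuous_id.mul continuous_const).neg)).smul tent_cont
  have step2 : ∫ x in Set.Icc (-1:ℝ) 1, Real.fourierChar (-(x * ξ)) • tent x
      = ∫ x in (-1:ℝ)..1, Real.fourierChar (-(x * ξ)) • tent x := by
    rw [intervalIntegral.integral_of_le (by norm_num), MeasureTheory.integral_Icc_eq_integral_Ioc]
  -- pointwise formula
  have point : ∀ x : ℝ, Real.fourierChar (-(x * ξ)) • tent x
      = ((max (1 - |x|) 0 : ℝ) : ℂ) * Complex.exp (c * x) := by
    intro x
    rw [Circle.smul_def, Real.fourierChar_apply, tent]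
    rw [show ((2 * π * -(x * ξ) : ℝ) : ℂ) * Complex.I = c * x by rw [hc]; push_cast; ring]
    rw [smul_eq_mul]
    ring
  have split : ∫ x in (-1:ℝ)..1, Real.fourierChar (-(x * ξ)) • tent x
      = (∫ x in (-1:ℝ)..0, ((1 + x : ℝ) : ℂ) * Complex.exp (c * x))
        + ∫ x in (0:ℝ)..1, ((1 - x : ℝ) : ℂ) * Complex.exp (c * x) := by
    rw [← intervalIntegral.integral_add_adjacent_intervals
      (cont.intervalIntegrable (-1) 0) (cont.intervalIntegrable 0 1)]
    congr 1
    · apply intervalIntegral.integral_congr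
      intro x hx
      rw [Set.uIcc_of_le (by norm_num : (-1:ℝ) ≤ 0)] at hx
      simp only [point x]
      congr 1
      norm_cast
      rw [_root_.abs_of_nonpos hx.2, max_eq_left (by linarith [hx.1] : (0:ℝ) ≤ 1 - -x)]
      ring
    · apply intervalIntegral.integral_congr
      intro x hx
      rw [Set.uIcc_of_le (by norm_num : (0:ℝ) ≤ 1)] at hx
      simp only [point x]
      congr 1
      norm_cast
      rw [_root_.abs_of_nonneg hx.1, max_eq_left (by linarith [hx.2] : (0:ℝ) ≤ 1 - x)]
  -- antiderivatives
  have hexp : ∀ x : ℝ, HasDerivAt (fun y : ℝ => Complex.exp (c * y))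
      (c * Complex.exp (c * x)) x := by
    intro x
    have h0 : HasDerivAt (fun y : ℝ => ((y : ℝ) : ℂ)) 1 x := (hasDerivAt_id x).ofReal_comp
    have h1 : HasDerivAt (fun y : ℝ => c * (y : ℂ)) c x := by
      simpa using h0.const_mul c
    simpa [mul_comm] using h1.cexp
  have anti1 : ∀ x : ℝ, HasDerivAt
      (fun y : ℝ => ((1 + y : ℝ) : ℂ) / c * Complex.exp (c * y) - Complex.exp (c * y) / c ^ 2)
      (((1 + x : ℝ) : ℂ) * Complex.exp (c * x)) x := by
    intro x
    have h0 : HasDerivAt (fun y : ℝ => ((1 + y : ℝ) : ℂ)) 1 x := by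
      have : HasDerivAt (fun y : ℝ => 1 + y) 1 x := by
        simpa using (hasDerivAt_id x).const_add 1
      simpa using this.ofReal_comp
    have h1 : HasDerivAt (fun y : ℝ => ((1 + y : ℝ) : ℂ) / c) (1 / c) x := h0.div_const c
    have h2 := (h1.mul (hexp x)).sub ((hexp x).div_const (c ^ 2))
    refine h2.congr_deriv ?_
    field_simp
    ring
  have anti2 : ∀ x : ℝ, HasDerivAt
      (fun y : ℝ => ((1 - y : ℝ) : ℂ) / c * Complex.exp (c * y) + Complex.exp (c * y) / c ^ 2)
      (((1 - x : ℝ) : ℂ) * Complex.exp (c * x)) x := by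
    intro x
    have h0 : HasDerivAt (fun y : ℝ => ((1 - y : ℝ) : ℂ)) (-1) x := by
      have : HasDerivAt (fun y : ℝ => 1 - y) (-1) x := by
        simpa using (hasDerivAt_id x).const_sub 1
      simpa using this.ofReal_comp
    have h1 : HasDerivAt (fun y : ℝ => ((1 - y : ℝ) : ℂ) / c) (-1 / c) x := h0.div_const c
    have h2 := (h1.mul (hexp x)).add ((hexp x).div_const (c ^ 2))
    refine h2.congr_deriv ?_
    field_simp
    ring
  have contexp : Continuous fun x : ℝ => Complex.exp (c * x) :=
    Complex.continuous_exp.comp (continuous_const.mul Complex.continuous_ofReal)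
  have cont1 : Continuous fun x : ℝ => ((1 + x : ℝ) : ℂ) * Complex.exp (c * x) :=
    (Complex.continuous_ofReal.comp (continuous_const.add continuous_id)).mul contexp
  have cont2 : Continuous fun x : ℝ => ((1 - x : ℝ) : ℂ) * Complex.exp (c * x) :=
    (Complex.continuous_ofReal.comp (continuous_const.sub continuous_id)).mul contexp
  have int1 : (∫ x in (-1:ℝ)..0, ((1 + x : ℝ) : ℂ) * Complex.exp (c * x))
      = 1 / c - 1 / c ^ 2 + Complex.exp (-c) / c ^ 2 := by
    rw [intervalIntegral.integral_eq_sub_of_hasDerivAt (fun x _ => anti1 x)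
      (cont1.intervalIntegrable _ _)]
    push_cast
    rw [show c * (-1 : ℂ) = -c by ring, show c * (0 : ℂ) = 0 by ring, Complex.exp_zero]
    field_simp
    ring
  have int2 : (∫ x in (0:ℝ)..1, ((1 - x : ℝ) : ℂ) * Complex.exp (c * x))
      = Complex.exp c / c ^ 2 - (1 / c + 1 / c ^ 2) := by
    rw [intervalIntegral.integral_eq_sub_of_hasDerivAt (fun x _ => anti2 x)
      (cont2.intervalIntegrable _ _)]
    push_cast
    rw [show c * (1 : ℂ) = c by ring, show c * (0 : ℂ) = 0 by ring, Complex.exp_zero]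
    field_simp
    ring
  rw [step1, step2, split, int1, int2]
  -- now evaluate
  have hcsq : c ^ 2 = ((-(4 * π ^ 2 * ξ ^ 2) : ℝ) : ℂ) := by
    rw [hc]
    rw [mul_pow, Complex.I_sq]
    push_cast
    ring
  have hsum : Complex.exp c + Complex.exp (-c) = ((2 * Real.cos (2 * π * ξ) : ℝ) : ℂ) := by
    rw [hc]
    rw [show ((-2 * π * ξ : ℝ) : ℂ) * Complex.I = ((-2 * π * ξ : ℝ) : ℂ) * Complex.I from rfl]
    rw [Complex.exp_mul_I, ← neg_mul, Complex.exp_mul_I]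
    rw [← Complex.ofReal_neg, ← Complex.ofReal_cos, ← Complex.ofReal_sin,
      ← Complex.ofReal_cos, ← Complex.ofReal_sin]
    rw [show (-(-2 * π * ξ) : ℝ) = 2 * π * ξ by ring]
    rw [show ((-2) * π * ξ : ℝ) = -(2 * π * ξ) by ring, Real.cos_neg, Real.sin_neg]
    push_cast
    ring
  have goal_c : 1 / c - 1 / c ^ 2 + Complex.exp (-c) / c ^ 2
      + (Complex.exp c / c ^ 2 - (1 / c + 1 / c ^ 2))
      = (Complex.exp c + Complex.exp (-c) - 2) / c ^ 2 := by
    field_simp [hcne]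
    ring
  rw [goal_c, hsum, hcsq]
  rw [show ((2 * Real.cos (2 * π * ξ) : ℝ) : ℂ) - 2 = ((2 * Real.cos (2 * π * ξ) - 2 : ℝ) : ℂ) by
    push_cast; ring]
  rw [show (((2 * Real.cos (2 * π * ξ) - 2 : ℝ) : ℂ)) / ((-(4 * π ^ 2 * ξ ^ 2) : ℝ) : ℂ)
      = (((2 * Real.cos (2 * π * ξ) - 2) / (-(4 * π ^ 2 * ξ ^ 2)) : ℝ) : ℂ) by push_cast; ring]
  congr 1
  have hs : Real.cos (2 * (π * ξ)) = 1 - 2 * Real.sin (π * ξ) ^ 2 := by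
    rw [Real.cos_two_mul]
    have := Real.sin_sq_add_cos_sq (π * ξ)
    ring_nf
    nlinarith [this]
  rw [show (2 * π * ξ : ℝ) = 2 * (π * ξ) by ring, hs]
  have hne : (π * ξ) ^ 2 ≠ 0 := pow_ne_zero 2 (mul_ne_zero hπ hξ)
  field_simp
  ring

lemma norm_tent (x : ℝ) : ‖tent x‖ = max (1 - |x|) 0 := by
  rw [tent, Complex.norm_real, Real.norm_eq_abs, _root_.abs_of_nonneg (le_max_right _ _)]

lemma fourier_tent_cont : Continuous (𝓕 tent) :=
  VectorFourier.fourierIntegral_continuous Real.continuous_fourierChar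
    (by exact continuous_inner) tent_integrable

lemma fourier_tent_le_two (ξ : ℝ) : ‖𝓕 tent ξ‖ ≤ 2 := by
  refine (VectorFourier.norm_fourierIntegral_le_integral_norm _ _ _ _ _).trans ?_
  have h1 : ∀ x : ℝ, ‖tent x‖ ≤ Set.indicator (Set.Icc (-1:ℝ) 1) (fun _ => (1:ℝ)) x := by
    intro x
    by_cases hx : x ∈ Set.Icc (-1:ℝ) 1
    · rw [Set.indicator_of_mem hx, norm_tent]
      have : |x| ≥ 0 := abs_nonneg x
      apply max_le (by linarith) (by norm_num)
    · rw [Set.indicator_of_notMem hx, tent_zero hx, norm_zero]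
  have h2 : Integrable (Set.indicator (Set.Icc (-1:ℝ) 1) (fun _ => (1:ℝ))) := by
    rw [integrable_indicator_iff measurableSet_Icc]
    exact integrableOn_const (by simp [Real.volume_Icc])
  calc ∫ x, ‖tent x‖ ≤ ∫ x, Set.indicator (Set.Icc (-1:ℝ) 1) (fun _ => (1:ℝ)) x :=
        integral_mono tent_integrable.norm h2 h1
    _ = 2 := by
        rw [MeasureTheory.integral_indicator measurableSet_Icc]
        simp [Real.volume_Icc]
        norm_num

lemma fourier_tent_bound (ξ : ℝ) : ‖𝓕 tent ξ‖ ≤ 4 * (1 + ξ ^ 2)⁻¹ := by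
  have hξ2 : (0:ℝ) < 1 + ξ ^ 2 := by positivity
  by_cases h : |ξ| ≤ 1
  · have habs : ξ ^ 2 ≤ 1 := by
      nlinarith [_root_.sq_abs ξ, abs_nonneg ξ, mul_le_mul h h (abs_nonneg ξ) (by norm_num : (0:ℝ) ≤ 1)]
    have : 1 + ξ ^ 2 ≤ 2 := by linarith
    calc ‖𝓕 tent ξ‖ ≤ 2 := fourier_tent_le_two ξ
      _ ≤ 4 * (1 + ξ ^ 2)⁻¹ := by
          rw [le_mul_inv_iff₀ hξ2]; nlinarith
  · push_neg at h
    have hξ : ξ ≠ 0 := by intro h0; rw [h0, abs_zero] at h; linarith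
    rw [fourier_tent hξ, Complex.norm_real, Real.norm_eq_abs]
    have hsq : (1:ℝ) < ξ ^ 2 := by nlinarith [_root_.sq_abs ξ]
    have hπ : (1:ℝ) ≤ π := by linarith [Real.pi_gt_three]
    have hp2 : (1:ℝ) ≤ π ^ 2 := by nlinarith
    have hb : |Real.sin (π * ξ) ^ 2 / (π * ξ) ^ 2| ≤ 1 / ξ ^ 2 := by
      rw [abs_div, _root_.abs_of_nonneg (sq_nonneg _), _root_.abs_of_nonneg (sq_nonneg _)]
      apply div_le_div₀ (by positivity) (by nlinarith [Real.sin_le_one (π*ξ), Real.neg_one_le_sin (π*ξ)])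
        (by nlinarith [sq_nonneg ξ]) (by rw [mul_pow]; nlinarith [sq_nonneg ξ])
    refine hb.trans ?_
    rw [show (4:ℝ) * (1 + ξ ^ 2)⁻¹ = 4 / (1 + ξ ^ 2) by ring,
      div_le_div_iff₀ (by nlinarith) hξ2]
    nlinarith

lemma fourier_tent_integrable : Integrable (𝓕 tent) := by
  apply Integrable.mono' ((integrable_inv_one_add_sq).const_mul 4)
    fourier_tent_cont.aestronglyMeasurable
  exact Filter.Eventually.of_forall fourier_tent_bound

lemma tent_l2 : ∫ x : ℝ, ‖tent x‖ ^ 2 = 2 / 3 := by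
  have supp : ∀ x : ℝ, x ∉ Set.Icc (-1:ℝ) 1 → ‖tent x‖ ^ 2 = 0 := by
    intro x hx; rw [tent_zero hx]; simp
  have cont : Continuous fun x : ℝ => ‖tent x‖ ^ 2 := by
    exact (tent_cont.norm).pow 2
  rw [← setIntegral_eq_integral_of_forall_compl_eq_zero supp]
  rw [MeasureTheory.integral_Icc_eq_integral_Ioc,
    ← intervalIntegral.integral_of_le (by norm_num : (-1:ℝ) ≤ 1)]
  rw [← intervalIntegral.integral_add_adjacent_intervals
    (cont.intervalIntegrable (-1) 0) (cont.intervalIntegrable 0 1)]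
  have anti1 : ∀ x : ℝ, HasDerivAt (fun y : ℝ => (1 + y) ^ 3 / 3) ((1 + x) ^ 2) x := by
    intro x
    have h0 : HasDerivAt (fun y : ℝ => 1 + y) 1 x := by simpa using (hasDerivAt_id x).const_add 1
    have h1 := (h0.pow 3).div_const 3
    refine h1.congr_deriv ?_
    ring
  have anti2 : ∀ x : ℝ, HasDerivAt (fun y : ℝ => -((1 - y) ^ 3) / 3) ((1 - x) ^ 2) x := by
    intro x
    have h0 : HasDerivAt (fun y : ℝ => 1 - y) (-1) x := by simpa using (hasDerivAt_id x).const_sub 1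
    have h1 := ((h0.pow 3).neg).div_const 3
    refine h1.congr_deriv ?_
    ring
  have e1 : (∫ x in (-1:ℝ)..0, ‖tent x‖ ^ 2) = ∫ x in (-1:ℝ)..0, (1 + x) ^ 2 := by
    apply intervalIntegral.integral_congr
    intro x hx
    rw [Set.uIcc_of_le (by norm_num : (-1:ℝ) ≤ 0)] at hx
    simp only [norm_tent]
    rw [_root_.abs_of_nonpos hx.2, max_eq_left (by linarith [hx.1] : (0:ℝ) ≤ 1 - -x)]
    ring
  have e2 : (∫ x in (0:ℝ)..1, ‖tent x‖ ^ 2) = ∫ x in (0:ℝ)..1, (1 - x) ^ 2 := by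
    apply intervalIntegral.integral_congr
    intro x hx
    rw [Set.uIcc_of_le (by norm_num : (0:ℝ) ≤ 1)] at hx
    simp only [norm_tent]
    rw [_root_.abs_of_nonneg hx.1, max_eq_left (by linarith [hx.2] : (0:ℝ) ≤ 1 - x)]
  rw [e1, e2]
  rw [intervalIntegral.integral_eq_sub_of_hasDerivAt (fun x _ => anti1 x)
    ((by continuity : Continuous fun x : ℝ => (1+x)^2).intervalIntegrable _ _)]
  rw [intervalIntegral.integral_eq_sub_of_hasDerivAt (fun x _ => anti2 x)
    ((by continuity : Continuous fun x : ℝ => (1-x)^2).intervalIntegrable _ _)]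
  norm_num

noncomputable def G : ℝ → ℝ := fun u => 16 * Real.sin (π * u) ^ 4 / u ^ 4

lemma G_nonneg (u : ℝ) : 0 ≤ G u := by
  unfold G
  positivity

lemma G_eq_fourier_tent {ξ : ℝ} (hξ : ξ ≠ 0) : G ξ = 16 * π ^ 4 * ‖𝓕 tent ξ‖ ^ 2 := by
  rw [fourier_tent hξ, Complex.norm_real, Real.norm_eq_abs]
  rw [_root_.sq_abs, G]
  have hπ : (π:ℝ) ≠ 0 := Real.pi_ne_zero
  rw [div_pow]
  field_simp

lemma G_integrable : Integrable G := by
  have h : Integrable (fun ξ => 16 * π ^ 4 * ‖𝓕 tent ξ‖ ^ 2) := by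
    apply Integrable.const_mul
    apply Integrable.mono' (fourier_tent_integrable.norm.const_mul 2)
      (fourier_tent_cont.norm.pow 2).aestronglyMeasurable
    refine Filter.Eventually.of_forall fun ξ => ?_
    rw [Real.norm_eq_abs, _root_.abs_of_nonneg (by simp only [Pi.pow_apply]; positivity)]
    calc ‖𝓕 tent ξ‖ ^ 2 = ‖𝓕 tent ξ‖ * ‖𝓕 tent ξ‖ := sq ‖𝓕 tent ξ‖
      _ ≤ 2 * ‖𝓕 tent ξ‖ := by nlinarith [fourier_tent_le_two ξ, norm_nonneg (𝓕 tent ξ)]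
  apply h.congr
  filter_upwards [compl_mem_ae_iff.2 (Real.volume_singleton (a := 0))] with ξ hξ
  exact (G_eq_fourier_tent hξ).symm

lemma G_integral : ∫ u, G u = 32 * π ^ 4 / 3 := by
  have h1 : ∫ u, G u = ∫ u, 16 * π ^ 4 * ‖𝓕 tent u‖ ^ 2 := by
    apply integral_congr_ae
    filter_upwards [compl_mem_ae_iff.2 (Real.volume_singleton (a := 0))] with ξ hξ
    exact G_eq_fourier_tent hξ
  rw [h1, MeasureTheory.integral_const_mul, parseval_norm tent_cont tent_integrable
    fourier_tent_integrable, tent_l2]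
  ring

lemma ae_ne_zero : ∀ᵐ α : ℝ, α ≠ 0 :=
  compl_mem_ae_iff.2 (Real.volume_singleton (a := 0))

lemma alpha_integral {ξ : ℝ} (hξ : ξ ≠ 0) :
    ∫ α : ℝ, 16 * Real.sin (π * α * ξ) ^ 4 / α ^ 4 = 32 * π ^ 4 / 3 * |ξ| ^ 3 := by
  have key : ∀ᵐ α : ℝ, 16 * Real.sin (π * α * ξ) ^ 4 / α ^ 4 = G (ξ * α) * ξ ^ 4 := by
    filter_upwards [ae_ne_zero] with α hα
    rw [G, show π * (ξ * α) = π * α * ξ by ring]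
    field_simp
  rw [integral_congr_ae key, MeasureTheory.integral_mul_const,
    MeasureTheory.Measure.integral_comp_mul_left G ξ, G_integral]
  rw [smul_eq_mul, abs_inv]
  have h4 : ξ ^ 4 = |ξ| ^ 4 := by
    rw [pow_abs, _root_.abs_of_nonneg (by positivity : (0:ℝ) ≤ ξ ^ 4)]
  rw [h4]
  have habs : |ξ| ≠ 0 := abs_ne_zero.mpr hξ
  field_simp

lemma cos_diff_sq (θ : ℝ) : (2 * Real.cos (2 * π * θ) - 2) ^ 2 = 16 * Real.sin (π * θ) ^ 4 := by
  have h : Real.cos (2 * (π * θ)) = 1 - 2 * Real.sin (π * θ) ^ 2 := by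
    rw [Real.cos_two_mul]
    nlinarith [Real.sin_sq_add_cos_sq (π * θ)]
  rw [show 2 * π * θ = 2 * (π * θ) by ring, h]
  ring

lemma schwartz_fourier_integrable (f : SchwartzMap ℝ ℂ) : Integrable (𝓕 ⇑f) := by
  have h := (SchwartzMap.fourierTransformCLM ℝ f).integrable (μ := volume)
  rwa [SchwartzMap.fourierTransformCLM_apply] at h

lemma schwartz_fourier_continuous (f : SchwartzMap ℝ ℂ) : Continuous (𝓕 ⇑f) := by
  have h := (SchwartzMap.fourierTransformCLM ℝ f).continuous
  rwa [SchwartzMap.fourierTransformCLM_apply] at h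

lemma inner_plancherel (f : SchwartzMap ℝ ℂ) (α : ℝ) :
    ∫ x : ℝ, ‖f (x + α) + f (x - α) - 2 * f x‖ ^ 2
      = ∫ ξ : ℝ, 16 * Real.sin (π * α * ξ) ^ 4 * ‖𝓕 (⇑f) ξ‖ ^ 2 := by
  have hi : Integrable (⇑f) := f.integrable
  have hgc : Continuous fun x : ℝ => f (x + α) + f (x - α) - 2 * f x := by
    have h1 : Continuous fun x : ℝ => f (x + α) :=
      f.continuous.comp (continuous_id.add continuous_const)
    have h2 : Continuous fun x : ℝ => f (x - α) :=
      f.continuous.comp (continuous_id.sub continuous_const)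
    exact (h1.add h2).sub (continuous_const.mul f.continuous)
  have hgi : Integrable fun x : ℝ => f (x + α) + f (x - α) - 2 * f x :=
    ((hi.comp_add_right α).add (hi.comp_sub_right α)).sub (hi.const_mul 2)
  have hchar_cont : Continuous fun ξ : ℝ =>
      ((Real.fourierChar (α * ξ) : ℂ) + (Real.fourierChar (-α * ξ) : ℂ) - 2) := by
    have hcoe : ∀ β : ℝ, Continuous fun ξ : ℝ => (Real.fourierChar (β * ξ) : ℂ) := by
      intro β
      have : Continuous fun ξ : ℝ => Real.fourierChar (β * ξ) :=
        Real.continuous_fourierChar.comp (continuous_const.mul continuous_id)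
      exact continuous_subtype_val.comp this
    exact ((hcoe α).add (hcoe (-α))).sub continuous_const
  have hchar_bdd : ∀ ξ : ℝ,
      ‖((Real.fourierChar (α * ξ) : ℂ) + (Real.fourierChar (-α * ξ) : ℂ) - 2)‖ ≤ 4 := by
    intro ξ
    have n1 : ‖(Real.fourierChar (α * ξ) : ℂ)‖ = 1 := by
      rw [Circle.norm_coe]
    have n2 : ‖(Real.fourierChar (-α * ξ) : ℂ)‖ = 1 := by
      rw [Circle.norm_coe]
    calc ‖((Real.fourierChar (α * ξ) : ℂ) + (Real.fourierChar (-α * ξ) : ℂ) - 2)‖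
        ≤ ‖(Real.fourierChar (α * ξ) : ℂ) + (Real.fourierChar (-α * ξ) : ℂ)‖ + ‖(2:ℂ)‖ :=
          norm_sub_le _ _
      _ ≤ ‖(Real.fourierChar (α * ξ) : ℂ)‖ + ‖(Real.fourierChar (-α * ξ) : ℂ)‖ + ‖(2:ℂ)‖ := by
          linarith [norm_add_le ((Real.fourierChar (α * ξ) : ℂ)) ((Real.fourierChar (-α * ξ) : ℂ))]
      _ ≤ 4 := by rw [n1, n2]; simp; norm_num
  have hFgi : Integrable (𝓕 fun x : ℝ => f (x + α) + f (x - α) - 2 * f x) := by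
    have h1 : Integrable (fun ξ : ℝ =>
        ((Real.fourierChar (α * ξ) : ℂ) + (Real.fourierChar (-α * ξ) : ℂ) - 2) * 𝓕 (⇑f) ξ) :=
      Integrable.bdd_mul (schwartz_fourier_integrable f) hchar_cont.aestronglyMeasurable
        (Filter.Eventually.of_forall hchar_bdd)
    exact h1.congr (Filter.Eventually.of_forall fun ξ => (fourier_second_diff f α ξ).symm)
  have par := parseval_norm hgc hgi hFgi
  rw [← par]
  apply integral_congr_ae
  refine Filter.Eventually.of_forall fun ξ => ?_
  beta_reduce
  rw [fourier_second_diff f α ξ]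
  rw [show (-α * ξ) = -(α * ξ) by ring, char_sum_eq (α * ξ)]
  rw [norm_mul, mul_pow, Complex.norm_real, Real.norm_eq_abs, _root_.sq_abs]
  rw [show (2 * Real.cos (2 * π * (α * ξ)) - 2) = (2 * Real.cos (2 * π * (α* ξ)) - 2) from rfl]
  rw [show 2 * π * (α * ξ) = 2 * π * (α * ξ) from rfl]
  have := cos_diff_sq (α * ξ)
  rw [show π * (α * ξ) = π * α * ξ by ring] at this
  rw [this]

lemma schwartz_weighted_integrable (f : SchwartzMap ℝ ℂ) :
    Integrable (fun ξ : ℝ => |ξ| ^ 3 * ‖𝓕 (⇑f) ξ‖ ^ 2) := by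
  set F := SchwartzMap.fourierTransformCLM ℝ f with hF
  have hcoe : ⇑F = 𝓕 ⇑f := by rw [hF, SchwartzMap.fourierTransformCLM_apply]; rfl
  set C := SchwartzMap.seminorm ℝ 0 0 F with hC
  have hb : ∀ ξ : ℝ, ‖F ξ‖ ≤ C := by
    intro ξ
    have := SchwartzMap.le_seminorm ℝ 0 0 F ξ
    simpa using this
  have hC0 : 0 ≤ C := le_trans (norm_nonneg (F 0)) (hb 0)
  apply Integrable.mono' ((F.integrable_pow_mul (μ := volume) 3).const_mul C)
  · exact ((_root_.continuous_abs.pow 3).mul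
      (((schwartz_fourier_continuous f).norm).pow 2)).aestronglyMeasurable
  · refine Filter.Eventually.of_forall fun ξ => ?_
    rw [Real.norm_eq_abs, _root_.abs_of_nonneg (by positivity)]
    have h1 : ‖𝓕 (⇑f) ξ‖ ≤ C := by rw [← hcoe]; exact hb ξ
    have h2 : ‖ξ‖ = |ξ| := rfl
    rw [← hcoe, ← h2]
    nlinarith [mul_le_mul_of_nonneg_left (hb ξ)
      (mul_nonneg (pow_nonneg (norm_nonneg ξ) 3) (norm_nonneg (F ξ))), norm_nonneg (F ξ),
      pow_nonneg (norm_nonneg ξ) 3]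

open MeasureTheory in
theorem second_difference_plancherel' (f : SchwartzMap ℝ ℂ) :
    ∫ α : ℝ, (∫ x : ℝ, ‖f (x + α) + f (x - α) - 2 * f x‖ ^ 2 / α ^ 4) =
      (32 * Real.pi ^ 4 / 3) * ∫ ξ : ℝ, |ξ| ^ 3 * ‖FourierTransform.fourier (⇑f : ℝ → ℂ) ξ‖ ^ 2 := by
  have hFc := schwartz_fourier_continuous f
  have hI3 := schwartz_weighted_integrable f
  -- product integrability
  have hmeasH : AEStronglyMeasurable
      (fun p : ℝ × ℝ => 16 * Real.sin (π * p.1 * p.2) ^ 4 * ‖𝓕 (⇑f) p.2‖ ^ 2 / p.1 ^ 4)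
      (volume.prod volume) := by
    apply Measurable.aestronglyMeasurable
    apply Measurable.div
    · exact ((continuous_const.mul ((Real.continuous_sin.comp
        ((continuous_const.mul continuous_fst).mul continuous_snd)).pow 4)).mul
        ((hFc.comp continuous_snd).norm.pow 2)).measurable
    · exact (continuous_fst.pow 4).measurable
  have hIα : ∀ {ξ : ℝ}, ξ ≠ 0 →
      Integrable (fun α : ℝ => 16 * Real.sin (π * α * ξ) ^ 4 * ‖𝓕 (⇑f) ξ‖ ^ 2 / α ^ 4) := by
    intro ξ hξ
    have base : Integrable (fun α : ℝ => G (ξ * α) * ξ ^ 4 * ‖𝓕 (⇑f) ξ‖ ^ 2) :=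
      (G_integrable.comp_mul_left' hξ).mul_const _ |>.mul_const _
    apply base.congr
    filter_upwards [ae_ne_zero] with α hα
    rw [G, show π * (ξ * α) = π * α * ξ by ring]
    field_simp
  have hnorm_eq : ∀ {ξ : ℝ}, ξ ≠ 0 →
      ∫ α : ℝ, ‖16 * Real.sin (π * α * ξ) ^ 4 * ‖𝓕 (⇑f) ξ‖ ^ 2 / α ^ 4‖
        = 32 * π ^ 4 / 3 * (|ξ| ^ 3 * ‖𝓕 (⇑f) ξ‖ ^ 2) := by
    intro ξ hξ
    have drop : ∀ α : ℝ, ‖16 * Real.sin (π * α * ξ) ^ 4 * ‖𝓕 (⇑f) ξ‖ ^ 2 / α ^ 4‖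
        = 16 * Real.sin (π * α * ξ) ^ 4 / α ^ 4 * ‖𝓕 (⇑f) ξ‖ ^ 2 := by
      intro α
      rw [Real.norm_eq_abs, _root_.abs_of_nonneg (by positivity)]
      ring
    simp_rw [drop]
    rw [MeasureTheory.integral_mul_const, alpha_integral hξ]
    ring
  have hH : Integrable
      (Function.uncurry fun α ξ : ℝ =>
        16 * Real.sin (π * α * ξ) ^ 4 * ‖𝓕 (⇑f) ξ‖ ^ 2 / α ^ 4) (volume.prod volume) := by
    show Integrable
      (fun p : ℝ × ℝ => 16 * Real.sin (π * p.1 * p.2) ^ 4 * ‖𝓕 (⇑f) p.2‖ ^ 2 / p.1 ^ 4)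
      (volume.prod volume)
    rw [integrable_prod_iff' hmeasH]
    constructor
    · filter_upwards [ae_ne_zero] with ξ hξ
      exact hIα hξ
    · apply (hI3.const_mul (32 * π ^ 4 / 3)).congr
      filter_upwards [ae_ne_zero] with ξ hξ
      exact (hnorm_eq hξ).symm
  calc ∫ α : ℝ, (∫ x : ℝ, ‖f (x + α) + f (x - α) - 2 * f x‖ ^ 2 / α ^ 4)
      = ∫ α : ℝ, ∫ ξ : ℝ, 16 * Real.sin (π * α * ξ) ^ 4 * ‖𝓕 (⇑f) ξ‖ ^ 2 / α ^ 4 := by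
        apply integral_congr_ae
        refine Filter.Eventually.of_forall fun α => ?_
        beta_reduce
        rw [MeasureTheory.integral_div, inner_plancherel f α, ← MeasureTheory.integral_div]
    _ = ∫ ξ : ℝ, ∫ α : ℝ, 16 * Real.sin (π * α * ξ) ^ 4 * ‖𝓕 (⇑f) ξ‖ ^ 2 / α ^ 4 :=
        integral_integral_swap hH
    _ = ∫ ξ : ℝ, 32 * π ^ 4 / 3 * (|ξ| ^ 3 * ‖𝓕 (⇑f) ξ‖ ^ 2) := by
        apply integral_congr_ae
        filter_upwards [ae_ne_zero] with ξ hξ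
        have drop : ∀ α : ℝ, 16 * Real.sin (π * α * ξ) ^ 4 * ‖𝓕 (⇑f) ξ‖ ^ 2 / α ^ 4
            = 16 * Real.sin (π * α * ξ) ^ 4 / α ^ 4 * ‖𝓕 (⇑f) ξ‖ ^ 2 := fun α => by ring
        simp_rw [drop]
        rw [MeasureTheory.integral_mul_const, alpha_integral hξ]
        ring
    _ = (32 * Real.pi ^ 4 / 3) * ∫ ξ : ℝ, |ξ| ^ 3 * ‖FourierTransform.fourier (⇑f : ℝ → ℂ) ξ‖ ^ 2 := by
        rw [MeasureTheory.integral_const_mul]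

end Aux

open MeasureTheory Real SchwartzMap

theorem second_difference_plancherel (f : SchwartzMap ℝ ℂ) :
    ∫ α : ℝ, (∫ x : ℝ, ‖f (x + α) + f (x - α) - 2 * f x‖ ^ 2 / α ^ 4) =
      (32 * Real.pi ^ 4 / 3) * ∫ ξ : ℝ, |ξ| ^ 3 * ‖FourierTransform.fourier (⇑f : ℝ → ℂ) ξ‖ ^ 2 := by
  exact second_difference_plancherel' f
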